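/- arXiv:1207.1971 — 5 statements merged into one kernel-verified Lean document; each statement's English description precedes it below -/
import Mathlib

section
/- Assume ρ ≥ ℶ_ω and there is a regular cardinal ν with μ < ν < ℶ_ω and a family ℬ ⊆ [ρ]^{≤ν} of size ρ such that every u ∈ [ρ]^ν is contained in the union of fewer than ν members of ℬ. Then every μ-almost disjoint family 𝒜 ⊆ [ρ]^ν has cardinality at most ρ. -/
open Cardinal Ordinal Set

/-- Assume `ρ ≥ ℶ_ω` (realized as the cardinality of a type `β`), `ν` is a
regular cardinal with `μ < ν < ℶ_ω`, and `ℬ` is a family of subsets of `β` of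
size at most `ν`, with `#ℬ = ρ`, such that every `u ⊆ β` of size `ν` is
contained in the union of fewer than `ν` members of `ℬ`. Then every
`μ`-almost disjoint family `𝒜 ⊆ [β]^ν` has cardinality at most `ρ`. -/
theorem stmt_2 {β : Type} (ρ μ ν : Cardinal) (hβ : #β = ρ) (hρ : beth ω ≤ ρ)
    (hreg : ν.IsRegular) (hμν : μ < ν) (hν : ν < beth ω)
    (ℬ : Set (Set β)) (hℬsize : #ℬ = ρ) (hℬ : ∀ B ∈ ℬ, #B ≤ ν)
    (hcover : ∀ u : Set β, #u = ν →
      ∃ P : Set (Set β), P ⊆ ℬ ∧ #P < ν ∧ u ⊆ ⋃₀ P)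
    (𝒜 : Set (Set β)) (h𝒜 : ∀ A ∈ 𝒜, #A = ν)
    (had : ∀ A ∈ 𝒜, ∀ A' ∈ 𝒜, A ≠ A' → #(A ∩ A' : Set β) < μ) :
    #𝒜 ≤ ρ := by
  -- 2 ^ ν ≤ ρ
  have haleph0ρ : ℵ₀ ≤ ρ := le_trans (by simpa using beth_le_beth.mpr (le_refl (0:Ordinal) |>.trans (zero_le (a := (ω : Ordinal))))) hρ
  have h2ν : (2 : Cardinal) ^ ν ≤ ρ := by
    have hlim : Order.IsSuccLimit (ω : Ordinal) := isSuccLimit_omega0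
    have : ∃ a : Iio (ω : Ordinal), ν < beth a := by
      by_contra h
      push_neg at h
      have : beth ω ≤ ν := by
        rw [beth_limit hlim]
        exact ciSup_le' h
      exact absurd hν (not_lt.mpr this)
    obtain ⟨⟨a, ha⟩, hνa⟩ := this
    calc (2 : Cardinal) ^ ν ≤ 2 ^ beth a := power_le_power_left two_ne_zero hνa.le
      _ = beth (Order.succ a) := (beth_succ a).symm
      _ ≤ beth ω := beth_le_beth.mpr (hlim.succ_lt ha).le
      _ ≤ ρ := hρ
  -- for each A ∈ 𝒜, find B ∈ ℬ with #(A ∩ B) = ν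
  have key : ∀ A ∈ 𝒜, ∃ B ∈ ℬ, #(A ∩ B : Set β) = ν := by
    intro A hA
    obtain ⟨P, hPℬ, hPν, hPc⟩ := hcover A (h𝒜 A hA)
    by_contra h
    push_neg at h
    have hlt : ∀ B : P, #(A ∩ (B : Set β) : Set β) < ν := by
      rintro ⟨B, hB⟩
      have hle : #(A ∩ B : Set β) ≤ ν :=
        le_trans (mk_le_mk_of_subset (inter_subset_right)) (hℬ B (hPℬ hB))
      exact lt_of_le_of_ne hle (h B (hPℬ hB))
    have hsub : A ⊆ ⋃ B : P, (A ∩ (B : Set β)) := by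
      intro x hx
      obtain ⟨B, hB, hxB⟩ := hPc hx
      exact mem_iUnion.mpr ⟨⟨B, hB⟩, ⟨hx, hxB⟩⟩
    have : #A ≤ #(⋃ B : P, (A ∩ (B : Set β) : Set β)) := mk_le_mk_of_subset hsub
    have h2 : #(⋃ B : P, (A ∩ (B : Set β) : Set β)) ≤ #P * ⨆ B : P, #(A ∩ (B : Set β) : Set β) :=
      mk_iUnion_le _
    have hsup : (⨆ B : P, #(A ∩ (B : Set β) : Set β)) < ν := by
      rcases isEmpty_or_nonempty P with hP | hP
      · simp [ciSup_of_empty]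
        exact hreg.pos
      · exact iSup_lt_of_isRegular hreg hPν hlt
    have : #A < ν := lt_of_le_of_lt (this.trans h2) (mul_lt_of_lt hreg.aleph0_le hPν hsup)
    rw [h𝒜 A hA] at this
    exact lt_irrefl _ this
  -- build the injection
  choose! B hBℬ hBν using key
  have hinj : ∀ A ∈ 𝒜, ∀ A' ∈ 𝒜, B A = B A' → A ∩ B A = A' ∩ B A' → A = A' := by
    intro A hA A' hA' hB hS
    by_contra hne
    have hmu := had A hA A' hA' hne
    have : A ∩ B A ⊆ A ∩ A' := by
      intro x hx
      refine ⟨hx.1, ?_⟩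
      have : x ∈ A' ∩ B A' := by rw [← hS]; exact hx
      exact this.1
    have : ν ≤ #(A ∩ A' : Set β) := by
      rw [← hBν A hA]; exact mk_le_mk_of_subset this
    exact absurd (lt_of_le_of_lt this hmu) (not_lt.mpr hμν.le)
  let f : 𝒜 → Σ Bs : ℬ, Set (Bs : Set β) :=
    fun A => ⟨⟨B A, hBℬ A A.2⟩, {x : (B (A : Set β) : Set β) | (x : β) ∈ (A : Set β)}⟩
  have hfinj : Function.Injective f := by
    intro A A' hf
    have h2 := congrArg (fun p : Σ Bs : ℬ, Set (Bs : Set β) =>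
      ((p.1 : Set β), Subtype.val '' p.2)) hf
    simp only [f] at h2
    have hB : B (A : Set β) = B (A' : Set β) := congrArg Prod.fst h2
    have himg : ∀ (A₀ : Set β) (C : Set β),
        Subtype.val '' {x : C | (x : β) ∈ A₀} = A₀ ∩ C := by
      intro A₀ C
      ext y
      constructor
      · rintro ⟨⟨x, hxC⟩, hx, rfl⟩
        exact ⟨hx, hxC⟩
      · rintro ⟨hyA, hyC⟩
        exact ⟨⟨y, hyC⟩, hyA, rfl⟩
    have hS : (A : Set β) ∩ B (A : Set β) = (A' : Set β) ∩ B (A' : Set β) := by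
      have := congrArg Prod.snd h2
      simpa [himg] using this
    exact Subtype.ext (hinj A A.2 A' A'.2 hB hS)
  calc #𝒜 ≤ #(Σ Bs : ℬ, Set (Bs : Set β)) := mk_le_of_injective hfinj
    _ = sum (fun Bs : ℬ => 2 ^ #(Bs : Set β)) := by simp [mk_sigma, mk_set]
    _ ≤ sum (fun _ : ℬ => 2 ^ ν) :=
        sum_le_sum _ _ (fun Bs => power_le_power_left two_ne_zero (hℬ Bs Bs.2))
    _ = #ℬ * 2 ^ ν := sum_const' _ _
    _ ≤ ρ * ρ := by rw [hℬsize]; exact mul_le_mul_right h2ν ρ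
    _ = ρ := mul_eq_self haleph0ρ
end

section
/- Let ν be a regular cardinal and 𝒜 a μ-almost disjoint family of sets with μ < ν, where each A ∈ 𝒜 has |A| ≥ ν. Suppose ℬ is a family of sets, each of size ≤ ν, such that for every A ∈ 𝒜 there is B ∈ ℬ with |A ∩ B| = ν. Then |𝒜| ≤ |ℬ| · sup{2^{|B|} : B ∈ ℬ}. -/
open Cardinal Ordinal Set

/-- Let `ν` be a regular cardinal, `𝒜` a `μ`-almost disjoint family of sets
(`μ < ν`) with every member of size `≥ ν`, and `ℬ` a family of sets of size
`≤ ν` such that every `A ∈ 𝒜` has `#(A ∩ B) = ν` for some `B ∈ ℬ`.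
Then `#𝒜 ≤ #ℬ * sup {2 ^ #B : B ∈ ℬ}`. -/
theorem stmt_3 {α : Type} (μ ν : Cardinal) (hreg : ν.IsRegular) (hμν : μ < ν)
    (𝒜 ℬ : Set (Set α))
    (h𝒜 : ∀ A ∈ 𝒜, ν ≤ #A)
    (had : ∀ A ∈ 𝒜, ∀ A' ∈ 𝒜, A ≠ A' → #(A ∩ A' : Set α) < μ)
    (hℬ : ∀ B ∈ ℬ, #B ≤ ν)
    (htrace : ∀ A ∈ 𝒜, ∃ B ∈ ℬ, #(A ∩ B : Set α) = ν) :
    #𝒜 ≤ #ℬ * ⨆ B : ℬ, 2 ^ #(B : Set α) := by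
  choose B hBmem hBtrace using htrace
  have hinj : Function.Injective
      (fun A : 𝒜 => (⟨⟨B A A.2, hBmem A A.2⟩, {x : (B A A.2 : Set α) | (x : α) ∈ (A : Set α)}⟩ :
        Σ b : ℬ, Set (b : Set α))) := by
    rintro ⟨A, hA⟩ ⟨A', hA'⟩ h
    simp only [Sigma.mk.inj_iff, Subtype.mk.injEq] at h
    obtain ⟨hb, hset⟩ := h
    by_contra hne
    have hne' : A ≠ A' := by simpa using hne
    rw [← hb] at hset
    have hset' := eq_of_heq hset
    have key : ∀ x, x ∈ B A hA → (x ∈ A ↔ x ∈ A') := by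
      intro x hx
      have := Set.ext_iff.mp hset' ⟨x, hx⟩
      simpa using this
    have hsub : A ∩ B A hA ⊆ A ∩ A' := by
      rintro x ⟨hxA, hxB⟩
      exact ⟨hxA, (key x hxB).1 hxA⟩
    have h1 : ν ≤ #(A ∩ A' : Set α) := by
      rw [← hBtrace A hA]
      exact Cardinal.mk_le_mk_of_subset hsub
    exact absurd (h1.trans_lt (had A hA A' hA' hne')) (not_lt.mpr hμν.le)
  calc #𝒜 ≤ #(Σ b : ℬ, Set (b : Set α)) := Cardinal.mk_le_of_injective hinj
    _ = Cardinal.sum (fun b : ℬ => #(Set (b : Set α))) := Cardinal.mk_sigma _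
    _ = Cardinal.sum (fun b : ℬ => 2 ^ #(b : Set α)) := by simp [Cardinal.mk_set]
    _ ≤ #ℬ * ⨆ b : ℬ, 2 ^ #(b : Set α) := Cardinal.sum_le_mk_mul_iSup _
end

section
/- Let κ be an infinite cardinal and 𝒜 a κ-hereditarily essentially disjoint family of sets. Then for every set Y, the family 𝒜⌈Y = {A ∈ 𝒜 : |A ∩ Y| ≥ κ} has cardinality at most |Y| + κ (in particular, if |Y| ≥ κ then |𝒜⌈Y| ≤ |Y|). -/
open Cardinal Ordinal Set

def EssentiallyDisjoint {α : Type} (κ : Cardinal) (ℬ : Set (Set α)) : Prop :=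
  ∃ F : Set α → Set α,
    (∀ B ∈ ℬ, F B ⊆ B ∧ #(F B) < κ) ∧
    (∀ B ∈ ℬ, ∀ B' ∈ ℬ, B ≠ B' → Disjoint (B \ F B) (B' \ F B'))

def HED {α : Type} (κ : Cardinal) (𝒜 : Set (Set α)) : Prop :=
  ∀ H : Set α → Set α, (∀ A ∈ 𝒜, H A ⊆ A ∧ #(H A) = κ) →
    EssentiallyDisjoint κ (H '' 𝒜)

/-- If `κ` is infinite and `𝒜` is a `κ`-hereditarily essentially disjoint
family of sets (each of size `≥ κ`, so that the notion is nonvacuous), then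
for every set `Y` the subfamily `𝒜⌈Y = {A ∈ 𝒜 : #(A ∩ Y) ≥ κ}` has
cardinality at most `#Y + κ`; in particular it is `≤ #Y` when `#Y ≥ κ`. -/
theorem stmt_9 {α : Type} (κ : Cardinal) (hκ : ℵ₀ ≤ κ)
    (𝒜 : Set (Set α)) (h𝒜 : ∀ A ∈ 𝒜, κ ≤ #A) (hhed : HED κ 𝒜)
    (Y : Set α) :
    #({A ∈ 𝒜 | κ ≤ #(A ∩ Y : Set α)}) ≤ #Y + κ ∧
    (κ ≤ #Y → #({A ∈ 𝒜 | κ ≤ #(A ∩ Y : Set α)}) ≤ #Y) := by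
  classical
  -- Step 1: distinct members of 𝒜 intersect in fewer than κ points.
  have hsmall : ∀ A ∈ 𝒜, ∀ A' ∈ 𝒜, A ≠ A' → #(A ∩ A' : Set α) < κ := by
    intro A hA A' hA' hne
    by_contra hbig
    push_neg at hbig
    obtain ⟨S, hS_sub, hS_card⟩ := Cardinal.le_mk_iff_exists_subset.mp hbig
    have hSne : S.Nonempty := by
      rw [← Set.nonempty_coe_sort, ← Cardinal.mk_ne_zero_iff, hS_card]
      exact (Cardinal.aleph0_pos.trans_le hκ).ne'
    obtain ⟨x, hx⟩ := hSne
    have hT_card : #(S \ {x} : Set α) = κ := by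
      have h1 : #(S \ {x} : Set α) + #({x} : Set α) = #S :=
        Cardinal.mk_diff_add_mk (by simpa using hx)
      rw [Cardinal.mk_singleton, hS_card] at h1
      have hinf : ℵ₀ ≤ #(S \ {x} : Set α) := by
        by_contra hfin
        push_neg at hfin
        have : #(S \ {x} : Set α) + 1 < ℵ₀ :=
          Cardinal.add_lt_aleph0 hfin Cardinal.one_lt_aleph0
        rw [h1] at this
        exact absurd hκ (not_le.mpr this)
      rw [Cardinal.add_eq_left hinf (le_trans Cardinal.one_lt_aleph0.le hinf)] at h1
      exact h1
    -- auxiliary H'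
    have key : ∀ B : Set α, ∃ T : Set α,
        (B ∈ 𝒜 → T ⊆ B ∧ #T = κ) ∧ (B = A → T = S) ∧ (B = A' → T = S \ {x}) := by
      intro B
      by_cases h1 : B = A
      · refine ⟨S, fun _ => ⟨h1 ▸ hS_sub.trans inter_subset_left, hS_card⟩,
          fun _ => rfl, fun h2 => absurd (h1 ▸ h2 : A = A') hne⟩
      · by_cases h2 : B = A'
        · exact ⟨S \ {x}, fun _ =>
            ⟨(diff_subset).trans (h2 ▸ hS_sub.trans inter_subset_right), hT_card⟩,
            fun h => absurd h h1, fun _ => rfl⟩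
        · by_cases hB : B ∈ 𝒜
          · obtain ⟨T, hT1, hT2⟩ := Cardinal.le_mk_iff_exists_subset.mp (h𝒜 B hB)
            exact ⟨T, fun _ => ⟨hT1, hT2⟩, fun h => absurd h h1, fun h => absurd h h2⟩
          · exact ⟨∅, fun h => absurd h hB, fun h => absurd h h1, fun h => absurd h h2⟩
    choose H' hH' using key
    obtain ⟨F, hF1, hF2⟩ := hhed H' (fun B hB => (hH' B).1 hB)
    have hHA : H' A = S := (hH' A).2.1 rfl
    have hHA' : H' A' = S \ {x} := (hH' A').2.2 rfl
    have hmemA : H' A ∈ H' '' 𝒜 := ⟨A, hA, rfl⟩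
    have hmemA' : H' A' ∈ H' '' 𝒜 := ⟨A', hA', rfl⟩
    have hneH : H' A ≠ H' A' := by
      rw [hHA, hHA']
      intro h
      exact (h ▸ hx : x ∈ S \ {x}).2 rfl
    have hdisj := hF2 _ hmemA _ hmemA' hneH
    -- S \ {x} ⊆ F (H' A) ∪ F (H' A')
    have hcover : S \ {x} ⊆ F (H' A) ∪ F (H' A') := by
      intro y hy
      by_contra hyn
      simp only [Set.mem_union, not_or] at hyn
      have h1 : y ∈ H' A \ F (H' A) := ⟨by rw [hHA]; exact hy.1, hyn.1⟩
      have h2 : y ∈ H' A' \ F (H' A') := ⟨by rw [hHA']; exact hy, hyn.2⟩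
      exact Set.disjoint_left.mp hdisj h1 h2
    have hles : κ ≤ #(F (H' A) ∪ F (H' A') : Set α) :=
      hT_card ▸ Cardinal.mk_le_mk_of_subset hcover
    have hlt : #(F (H' A) ∪ F (H' A') : Set α) < κ :=
      lt_of_le_of_lt (Cardinal.mk_union_le _ _)
        (Cardinal.add_lt_of_lt hκ (hF1 _ hmemA).2 (hF1 _ hmemA').2)
    exact absurd hles (not_le.mpr hlt)
  -- Step 2: the main injection.
  have main : #({A ∈ 𝒜 | κ ≤ #(A ∩ Y : Set α)}) ≤ #Y := by
    have key : ∀ B : Set α, ∃ S : Set α,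
        B ∈ 𝒜 → S ⊆ B ∧ #S = κ ∧ (κ ≤ #(B ∩ Y : Set α) → S ⊆ Y) := by
      intro B
      by_cases hB : B ∈ 𝒜
      · by_cases hBY : κ ≤ #(B ∩ Y : Set α)
        · obtain ⟨S, hS1, hS2⟩ := Cardinal.le_mk_iff_exists_subset.mp hBY
          exact ⟨S, fun _ => ⟨hS1.trans inter_subset_left, hS2,
            fun _ => hS1.trans inter_subset_right⟩⟩
        · obtain ⟨S, hS1, hS2⟩ := Cardinal.le_mk_iff_exists_subset.mp (h𝒜 B hB)
          exact ⟨S, fun _ => ⟨hS1, hS2, fun h => absurd h hBY⟩⟩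
      · exact ⟨∅, fun h => absurd h hB⟩
    choose H hH using key
    obtain ⟨F, hF1, hF2⟩ := hhed H (fun B hB => ⟨(hH B hB).1, (hH B hB).2.1⟩)
    -- pick a point of H A \ F (H A) for each A in the subfamily
    have pick : ∀ A : ({A ∈ 𝒜 | κ ≤ #(A ∩ Y : Set α)} : Set (Set α)),
        ∃ y : Y, (y : α) ∈ H A.1 \ F (H A.1) := by
      rintro ⟨A, hA, hAY⟩
      have hmem : H A ∈ H '' 𝒜 := ⟨A, hA, rfl⟩
      have hne : (H A \ F (H A)).Nonempty := by
        rw [Set.nonempty_iff_ne_empty]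
        intro h
        have hsub : H A ⊆ F (H A) := by
          intro y hy
          by_contra hyn
          exact absurd h (Set.nonempty_iff_ne_empty.mp ⟨y, hy, hyn⟩)
        have : κ ≤ #(F (H A)) := (hH A hA).2.1 ▸ Cardinal.mk_le_mk_of_subset hsub
        exact absurd this (not_le.mpr (hF1 _ hmem).2)
      obtain ⟨y, hy⟩ := hne
      exact ⟨⟨y, (hH A hA).2.2 hAY hy.1⟩, hy⟩
    choose φ hφ using pick
    have hinj : Function.Injective φ := by
      rintro ⟨A, hA, hAY⟩ ⟨A', hA', hAY'⟩ heq
      by_contra hne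
      have hneA : A ≠ A' := fun h => hne (by simp [h])
      have hneH : H A ≠ H A' := by
        intro h
        have h1 : H A ⊆ A ∩ A' := subset_inter (hH A hA).1 (h ▸ (hH A' hA').1)
        have h2 : κ ≤ #(A ∩ A' : Set α) :=
          (hH A hA).2.1 ▸ Cardinal.mk_le_mk_of_subset h1
        exact absurd h2 (not_le.mpr (hsmall A hA A' hA' hneA))
      have hdisj := hF2 _ ⟨A, hA, rfl⟩ _ ⟨A', hA', rfl⟩ hneH
      have hy1 := hφ ⟨A, ⟨hA, hAY⟩⟩
      have hy2 := hφ ⟨A', ⟨hA', hAY'⟩⟩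
      rw [heq] at hy1
      exact Set.disjoint_left.mp hdisj hy1 hy2
    exact Cardinal.mk_le_of_injective hinj
  exact ⟨main.trans (self_le_add_right _ _), fun _ => main⟩
end

section
/- Let λ be a regular uncountable cardinal, κ < λ an infinite cardinal, and 𝒜 = {A_α : α < λ} ⊆ [λ]^{≥κ} a κ-almost disjoint family. Suppose f : λ → λ is an injective function such that f(α) belongs to the set of the first κ elements of A_α, for each α < λ. Let ⟨N_ζ : 1 ≤ ζ < λ⟩ be an increasing continuous chain of elementary submodels of H(θ) (θ large) with κ + ζ ⊆ N_ζ ∩ λ ∈ λ, |N_ζ| = κ + |ζ|, and with the sequence ⟨A_α : α < λ⟩ and f in N_1. Then for every ζ and every α < λ: if |A_α ∩ N_ζ| ≥ κ then α ∈ N_ζ. -/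
open Cardinal Ordinal Set FirstOrder

/-- The ordinal rank of an element of the canonical type `o.ToType` of a
well-order of type `o`. -/
noncomputable def rankIn (o : Ordinal) (x : o.ToType) : Ordinal :=
  @Ordinal.typein o.ToType (· < ·) ⟨⟩ x

/-- Function symbols of the language `⟨<, R, f⟩`: a single unary function
symbol (interpreted by the injection `f`). -/
def setFun : ℕ → Type := fun n => match n with | 1 => Unit | _ => Empty

/-- Relation symbols of the language `⟨<, R, f⟩`: two binary relation symbols
(`false` interpreted by the ordinal order, `true` by the membership relation
`x ∈ A a` of the family). -/
def setRel : ℕ → Type := fun n => match n with | 2 => Bool | _ => Empty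

/-- The first-order language `⟨<, R, f⟩` with the well-order, the family
membership relation and the regressive function as primitives; a chain of
elementary submodels of `H(θ)` containing `⟨A_α : α < λ⟩` and `f` induces a
chain of elementary substructures of `(λ; <, R, f)`, which is how we render
the hypothesis. -/
def setLang : Language := ⟨setFun, setRel⟩

/-- Let `lam` be a regular uncountable cardinal, `κ < lam` infinite, and
`𝒜 = {A a : a < lam}` a `κ`-almost disjoint family of subsets of `lam`
(represented by its canonical type `lam.ord.ToType`), each of size `≥ κ`.
Let `f` be injective with `f a` among the first `κ` elements of `A a`.
Let `⟨N ζ : 1 ≤ ζ < lam⟩` be an increasing continuous chain of elementary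
submodels (of `H(θ)`, rendered as elementary substructures of the induced
structure `(λ; <, R, f)`, which automatically contains the parameters
`⟨A a⟩` and `f`) with `κ + ζ ⊆ N ζ ∩ λ ∈ λ` and `|N ζ| = κ + |ζ|`.
Then for every such `ζ` and every `a`: if `#(A a ∩ N ζ) ≥ κ`,
then `a ∈ N ζ`. -/
theorem stmt_12 (lam κ : Cardinal) (hreg : lam.IsRegular) (hunc : ℵ₀ < lam)
    (hκ : ℵ₀ ≤ κ) (hκlam : κ < lam)
    (A : lam.ord.ToType → Set lam.ord.ToType)
    (hsize : ∀ a, κ ≤ #(A a))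
    (had : ∀ a b, a ≠ b → #(A a ∩ A b : Set lam.ord.ToType) < κ)
    (f : lam.ord.ToType → lam.ord.ToType)
    (hfinj : Function.Injective f)
    (hf : ∀ a, f a ∈ A a ∧ #({y ∈ A a | y < f a}) < κ)
    [S : setLang.Structure lam.ord.ToType]
    (hSf : ∀ v : Fin 1 → lam.ord.ToType,
      Language.Structure.funMap (L := setLang) (n := 1) () v = f (v 0))
    (hSR : ∀ v : Fin 2 → lam.ord.ToType,
      Language.Structure.RelMap (L := setLang) (n := 2) true v ↔ v 1 ∈ A (v 0))
    (hSlt : ∀ v : Fin 2 → lam.ord.ToType,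
      Language.Structure.RelMap (L := setLang) (n := 2) false v ↔ v 0 < v 1)
    (N : Ordinal → setLang.ElementarySubstructure lam.ord.ToType)
    (hNmono : ∀ ζ ξ, 1 ≤ ζ → ζ ≤ ξ → ξ < lam.ord →
      (N ζ : Set lam.ord.ToType) ⊆ (N ξ : Set lam.ord.ToType))
    (hNcont : ∀ ξ, ξ < lam.ord → Order.IsSuccLimit ξ →
      (N ξ : Set lam.ord.ToType) = ⋃ ζ ∈ Set.Ico (1 : Ordinal) ξ,
        (N ζ : Set lam.ord.ToType))
    (hNinit : ∀ ζ, 1 ≤ ζ → ζ < lam.ord →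
      ∃ d : lam.ord.ToType, (N ζ : Set lam.ord.ToType) = Set.Iio d)
    (hNlow : ∀ ζ, 1 ≤ ζ → ζ < lam.ord → ∀ x : lam.ord.ToType,
      rankIn lam.ord x < κ.ord + ζ → x ∈ N ζ)
    (hNcard : ∀ ζ, 1 ≤ ζ → ζ < lam.ord →
      #((N ζ : Set lam.ord.ToType)) = κ + ζ.card) :
    ∀ ζ, 1 ≤ ζ → ζ < lam.ord → ∀ a : lam.ord.ToType,
      κ ≤ #((A a ∩ (N ζ : Set lam.ord.ToType) : Set lam.ord.ToType)) →
      a ∈ N ζ := by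
  intro ζ hζ1 hζlam a hcard
  obtain ⟨d, hd⟩ := hNinit ζ hζ1 hζlam
  -- Step 1: f a ∈ N ζ
  have hfa : f a ∈ N ζ := by
    by_contra hfa
    have hsub : (A a ∩ (N ζ : Set lam.ord.ToType)) ⊆ {y ∈ A a | y < f a} := by
      rintro y ⟨hyA, hyN⟩
      refine ⟨hyA, ?_⟩
      by_contra hlt
      have hle : f a ≤ y := not_lt.mp hlt
      apply hfa
      have : f a ∈ (N ζ : Set lam.ord.ToType) := by
        rw [hd] at hyN ⊢
        exact lt_of_le_of_lt hle hyN
      exact this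
    exact absurd (hcard.trans (Cardinal.mk_le_mk_of_subset hsub)) (not_le.mpr (hf a).2)
  -- Step 2: elementarity
  set t₁ : setLang.Term (Fin 1 ⊕ Fin 1) :=
    Language.Term.func (l := 1) () ![Language.Term.var (Sum.inr 0)] with ht₁
  set t₂ : setLang.Term (Fin 1 ⊕ Fin 1) := Language.Term.var (Sum.inl 0) with ht₂
  set φ : setLang.Formula (Fin 1) := (t₁ =' t₂).ex with hφ
  have hrealM : ∀ v : Fin 1 → lam.ord.ToType, φ.Realize v ↔ ∃ x, f x = v 0 := by
    intro v
    simp only [hφ, ht₁, ht₂, Language.Formula.Realize, Language.BoundedFormula.realize_ex,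
      Language.BoundedFormula.realize_bdEqual, Language.Term.realize_func,
      Language.Term.realize_var]
    constructor
    · rintro ⟨x, hx⟩
      erw [Language.Term.realize_func, hSf] at hx
      exact ⟨_, hx⟩
    · rintro ⟨x, hx⟩
      refine ⟨x, ?_⟩
      erw [Language.Term.realize_func, hSf]
      simpa [Fin.snoc] using hx
  have helem := (N ζ).isElementary φ ![⟨f a, hfa⟩]
  have hM : φ.Realize (((↑) : (N ζ) → lam.ord.ToType) ∘ ![⟨f a, hfa⟩]) := by
    rw [hrealM]
    exact ⟨a, rfl⟩
  have hN := helem.mp hM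
  -- unpack realization in the substructure
  simp only [hφ, ht₁, ht₂, Language.Formula.Realize, Language.BoundedFormula.realize_ex,
    Language.BoundedFormula.realize_bdEqual, Language.Term.realize_func,
    Language.Term.realize_var] at hN
  obtain ⟨b, hb⟩ := hN
  have hNf : ∀ w : Fin 1 → ((N ζ : setLang.Substructure lam.ord.ToType)),
      ((Language.Structure.funMap (L := setLang) (n := 1) () w :
        (N ζ : setLang.Substructure lam.ord.ToType)) : lam.ord.ToType) = f ↑(w 0) := by
    intro w
    have h0 : ((Language.Structure.funMap (L := setLang) (n := 1) () w :
        (N ζ : setLang.Substructure lam.ord.ToType)) : lam.ord.ToType) =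
        Language.Structure.funMap (L := setLang) (n := 1) () (fun i => ↑(w i)) := rfl
    rw [h0, hSf]
  have hb' : f (↑b) = f a := by
    have h := congrArg (Subtype.val) hb
    erw [Language.Term.realize_func, hNf] at h
    simpa [Fin.snoc] using h
  have : (↑b : lam.ord.ToType) = a := hfinj hb'
  rw [← this]
  exact b.2
end

section
/- Let κ be an infinite cardinal with cf(κ) ≠ cf(χ) where χ ∈ {ω, ω₁} is chosen so that χ ≠ cf(κ) (χ = ω if cf(κ) ≠ ω, else χ = ω₁). Let 𝒜 = {A_α : α < λ} be a family of subsets of λ. Call Y ⊆ λ good if: (G1) A_α ∩ A_β ⊆ Y for distinct α, β ∈ Y; (G2) |A_α ∩ Y| ≥ κ for all α ∈ Y; (G3) for all α, if |A_α ∩ Y| ≥ κ then α ∈ Y. Then the union of any ⊆-increasing χ-chain of good sets is good. -/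
open Cardinal Ordinal Set

/-- Call `Y ⊆ α` *good* (for the family `A : α → Set α` and cardinal `κ`) if
(G1) `A a ∩ A b ⊆ Y` for distinct `a, b ∈ Y`, (G2) `#(A a ∩ Y) ≥ κ` for all
`a ∈ Y`, and (G3) `#(A a ∩ Y) ≥ κ` implies `a ∈ Y`. -/
def Good {α : Type} (κ : Cardinal) (A : α → Set α) (Y : Set α) : Prop :=
  (∀ a ∈ Y, ∀ b ∈ Y, a ≠ b → A a ∩ A b ⊆ Y) ∧
  (∀ a ∈ Y, κ ≤ #(A a ∩ Y : Set α)) ∧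
  (∀ a, κ ≤ #(A a ∩ Y : Set α) → a ∈ Y)

/-- Key regularity lemma: if a set of size `≥ κ` is covered by a `χ`-chain
with `χ ≠ cf κ` regular (`χ = ω` or `ω₁`), then its trace on some member of
the chain already has size `≥ κ`. -/
theorem key_chain {α : Type} (κ : Cardinal.{0}) (χ : Cardinal.{v}) (hκ : ℵ₀ ≤ κ)
    (hχ : (κ.ord.cof ≠ ℵ₀ ∧ χ = ℵ₀) ∨ (κ.ord.cof = ℵ₀ ∧ χ = aleph 1))
    (S : Ordinal.{v} → Set α)
    (hmono : ∀ i j, i ≤ j → j < χ.ord → S i ⊆ S j)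
    (hU : κ ≤ #(⋃ i < χ.ord, S i)) : ∃ i < χ.ord, κ ≤ #(S i) := by
  by_contra hcon
  push_neg at hcon
  rcases hχ with ⟨hcof, rfl⟩ | ⟨hcof, rfl⟩
  · -- χ = ℵ₀
    have homega : (ℵ₀ : Cardinal.{v}).ord = ω := ord_aleph0
    have hUeq : (⋃ i < (ℵ₀ : Cardinal.{v}).ord, S i) = ⋃ n : ℕ, S n := by
      ext x
      simp only [mem_iUnion]
      constructor
      · rintro ⟨i, hi, hx⟩
        rw [homega, Ordinal.lt_omega0] at hi
        obtain ⟨n, rfl⟩ := hi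
        exact ⟨n, hx⟩
      · rintro ⟨n, hx⟩
        exact ⟨n, by rw [homega]; exact Ordinal.nat_lt_omega0 n, hx⟩
    rw [hUeq] at hU
    have haleph : ℵ₀ < κ.ord.cof := by
      have hlim := Cardinal.isSuccLimit_ord hκ
      exact lt_of_le_of_ne (Ordinal.aleph0_le_cof.2 hlim) (Ne.symm hcof)
    have hk0 : ℵ₀ < κ := haleph.trans_le (Ordinal.cof_ord_le κ)
    have hsup : (⨆ n : ℕ, #(S n)) < κ := by
      apply Ordinal.iSup_lt
      · rwa [Cardinal.mk_nat]
      · intro n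
        exact hcon _ (by rw [homega]; exact Ordinal.nat_lt_omega0 n)
    have hlt : #(⋃ n : ℕ, S n) < κ :=
      (Cardinal.mk_iUnion_le fun n : ℕ => S n).trans_lt
        (Cardinal.mul_lt_of_lt hκ (by rwa [Cardinal.mk_nat]) hsup)
    exact absurd hU hlt.not_ge
  · -- χ = ℵ₁, cf κ = ℵ₀
    set o : Ordinal.{v} := (aleph 1).ord with ho
    set o0 : Ordinal.{0} := (aleph 1).ord with ho0
    have holift : o = Ordinal.lift.{v} o0 := by
      rw [ho, ho0, Cardinal.lift_ord, Cardinal.lift_aleph, Ordinal.lift_one]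
    have hcofo0 : o0.cof = aleph 1 := Cardinal.isRegular_aleph_one.cof_eq
    have honz : o0 ≠ 0 := by
      rw [ho0, Ne, Cardinal.ord_eq_zero]
      exact (aleph0_lt_aleph_one.trans_le' (by simp)).ne'
    haveI hne : Nonempty o0.ToType := Ordinal.toType_nonempty_iff_ne_zero.2 honz
    set e := (Ordinal.ToType.mk (o := o0)) with he
    set φ : o0.ToType → Ordinal.{v} :=
      fun b => Ordinal.lift.{v} ((e.symm b : Iio o0) : Ordinal) with hφ
    have hφlt : ∀ b, φ b < o := fun b => by
      rw [holift]
      exact Ordinal.lift_lt.2 (e.symm b).2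
    set T : o0.ToType → Set α := fun b => S (φ b) with hT
    have hUeq : (⋃ i < o, S i) = ⋃ b, T b := by
      ext x
      simp only [mem_iUnion]
      constructor
      · rintro ⟨i, hi, hx⟩
        rw [holift] at hi
        obtain ⟨i0, hi0, rfl⟩ := Ordinal.lt_lift_iff.1 hi
        refine ⟨e ⟨i0, hi0⟩, ?_⟩
        simpa [hT, hφ] using hx
      · rintro ⟨b, hx⟩
        exact ⟨φ b, hφlt b, hx⟩
    rw [hUeq] at hU
    have hTν : ∀ b, #(T b) ≤ ⨆ b', #(T b') := fun b =>
      le_ciSup (Cardinal.bddAbove_range _) b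
    by_cases hν : κ ≤ ⨆ b, #(T b)
    · -- the sup of the cardinalities along the chain is ≥ κ
      obtain ⟨ι, g, hg, hgc⟩ := Ordinal.exists_lsub_cof κ.ord
      rw [hcof] at hgc
      have hb : ∀ j : ι, ∃ b, (g j).card < #(T b) := fun j =>
        exists_lt_of_lt_ciSup ((Cardinal.lt_ord.1 (hg ▸ Ordinal.lt_lsub g j)).trans_le hν)
      choose b hb using hb
      set f : ι → Ordinal.{0} := fun j => ((e.symm (b j) : Iio o0) : Ordinal) with hf
      have hflt : ∀ j, f j < o0 := fun j => (e.symm (b j)).2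
      have histar0 : iSup f < o0 := by
        apply Ordinal.iSup_lt_ord _ hflt
        rw [hgc, hcofo0]
        exact aleph0_lt_aleph_one
      have histar : Ordinal.lift.{v} (iSup f) < o := by
        rw [holift]
        exact Ordinal.lift_lt.2 histar0
      have hsub : ∀ j, T (b j) ⊆ S (Ordinal.lift.{v} (iSup f)) := fun j =>
        hmono _ _ (Ordinal.lift_le.2 (Ordinal.le_iSup f j)) histar
      have hord : κ.ord ≤ (#(S (Ordinal.lift.{v} (iSup f)))).ord := by
        rw [← hg]
        exact Ordinal.lsub_le fun j =>
          Cardinal.lt_ord.2 ((hb j).trans_le (Cardinal.mk_le_mk_of_subset (hsub j)))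
      rw [Cardinal.ord_le_ord] at hord
      exact absurd hord (hcon _ histar).not_ge
    · -- otherwise the sup is < κ, which forces κ = ℵ₀ and finite chain members
      push_neg at hν
      have hone : (aleph 1 : Cardinal.{0}) = Order.succ ℵ₀ := by
        rw [← aleph_zero, ← aleph_succ, Ordinal.succ_zero]
      have hκa : κ = ℵ₀ := by
        rcases lt_or_ge (aleph 1 : Cardinal.{0}) κ with h1 | h1
        · exfalso
          have hlt : #(⋃ b, T b) < κ := by
            refine (Cardinal.mk_iUnion_le T).trans_lt ?_
            apply Cardinal.mul_lt_of_lt hκ _ hν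
            rw [Cardinal.mk_toType, ho0, Cardinal.card_ord]
            exact h1
          exact absurd hU hlt.not_ge
        · rw [hone, Order.le_succ_iff_eq_or_le] at h1
          rcases h1 with h1 | h1
          · exfalso
            have hbad : (ℵ₀ : Cardinal.{0}) = aleph 1 := by
              rw [← hcof, h1, ← hone, Cardinal.isRegular_aleph_one.cof_eq]
            exact absurd hbad aleph0_lt_aleph_one.ne
          · exact le_antisymm h1 hκ
      subst hκa
      obtain ⟨n, hn⟩ := Cardinal.lt_aleph0.1 hν
      have hInf : (⋃ b, T b).Infinite := by
        rw [← Set.infinite_coe_iff, Cardinal.infinite_iff]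
        exact hU
      obtain ⟨t, hts, htc⟩ := hInf.exists_subset_card_eq (n + 1)
      have hxb : ∀ x : t, ∃ b, (x : α) ∈ T b := fun x => mem_iUnion.1 (hts x.2)
      choose bb hbb using hxb
      have htne : t.Nonempty := Finset.card_pos.1 (by rw [htc]; exact Nat.succ_pos n)
      haveI : Nonempty t := htne.to_subtype
      set F : Finset o0.ToType := Finset.image bb Finset.univ with hF
      have hFne : F.Nonempty :=
        ⟨bb (Classical.arbitrary t), Finset.mem_image_of_mem _ (Finset.mem_univ _)⟩
      set bmax := F.max' hFne with hbmax
      have hsub : (t : Set α) ⊆ T bmax := by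
        intro x hx
        have hle : bb ⟨x, hx⟩ ≤ bmax :=
          F.le_max' _ (Finset.mem_image_of_mem _ (Finset.mem_univ _))
        have hsub' : T (bb ⟨x, hx⟩) ⊆ T bmax := by
          apply hmono
          · exact Ordinal.lift_le.2 (by exact_mod_cast e.symm.monotone hle)
          · exact hφlt bmax
        exact hsub' (hbb ⟨x, hx⟩)
      have h1 : (↑(n + 1) : Cardinal) ≤ #(T bmax) := by
        rw [← htc, ← Cardinal.mk_coe_finset]
        exact Cardinal.mk_le_mk_of_subset hsub
      have h2 : #(T bmax) ≤ (n : Cardinal) := by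
        rw [← hn]
        exact hTν bmax
      have h3 : (↑(n + 1) : Cardinal) ≤ (n : Cardinal) := h1.trans h2
      rw [Nat.cast_le] at h3
      omega

/-- Let `κ` be an infinite cardinal and `χ ∈ {ω, ω₁}` chosen with
`χ ≠ cf(κ)`, namely `χ = ω` if `cf κ ≠ ω` and `χ = ω₁` otherwise.  Then for
any family `A : α → Set α`, the union of a `⊆`-increasing `χ`-chain of good
sets is good. -/
theorem stmt_13 {α : Type} (κ χ : Cardinal) (hκ : ℵ₀ ≤ κ)
    (hχ : (κ.ord.cof ≠ ℵ₀ ∧ χ = ℵ₀) ∨ (κ.ord.cof = ℵ₀ ∧ χ = aleph 1))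
    (A : α → Set α)
    (Y : Ordinal → Set α)
    (hmono : ∀ i j, i ≤ j → j < χ.ord → Y i ⊆ Y j)
    (hgood : ∀ i < χ.ord, Good κ A (Y i)) :
    Good κ A (⋃ i < χ.ord, Y i) := by
  refine ⟨?_, ?_, ?_⟩
  · -- (G1)
    intro a ha b hb hab
    rw [mem_iUnion₂] at ha hb
    obtain ⟨i, hi, hai⟩ := ha
    obtain ⟨j, hj, hbj⟩ := hb
    have hk : max i j < χ.ord := max_lt hi hj
    have h1 : A a ∩ A b ⊆ Y (max i j) :=
      (hgood _ hk).1 a (hmono i _ (le_max_left i j) hk hai) b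
        (hmono j _ (le_max_right i j) hk hbj) hab
    exact h1.trans (Set.subset_biUnion_of_mem hk)
  · -- (G2)
    intro a ha
    rw [mem_iUnion₂] at ha
    obtain ⟨i, hi, hai⟩ := ha
    refine ((hgood i hi).2.1 a hai).trans (Cardinal.mk_le_mk_of_subset ?_)
    exact Set.inter_subset_inter_right _ (Set.subset_biUnion_of_mem hi)
  · -- (G3)
    intro a ha
    have hUeq : (A a ∩ ⋃ i, ⋃ (_ : i < χ.ord), Y i) = ⋃ i < χ.ord, A a ∩ Y i := by
      rw [Set.inter_iUnion₂]
    rw [hUeq] at ha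
    obtain ⟨i, hi, hki⟩ := key_chain κ χ hκ hχ (fun i => A a ∩ Y i)
      (fun i j hij hj => Set.inter_subset_inter_right _ (hmono i j hij hj)) ha
    have hmem := (hgood i hi).2.2 a hki
    exact Set.mem_biUnion hi hmem
end
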